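/- Monotonicity of memorization under partition refinement: Let M = {π_1, …, π_M} be a finite ordered set of masked positions and let q : Finset → position → ℝ be a per-token recovery probability function, where q(U, π) ∈ [0,1] is the probability of correctly recovering token π given observed set U. Assume monotonicity: U ⊆ W implies q(U, π) ≤ q(W, π) for all π ∉ W. For a partition of the ordered list (π_1,…,π_M) into N consecutive chunks Δ_1,…,Δ_N, define the success probability P(𝒫) = ∏_{k=1}^N ∏_{π ∈ Δ_k} q(U_{k-1}, π), where U_0 is the initially observed set and U_k = U_{k-1} ∪ Δ_k. Then if partition 𝒫₁ refines partition 𝒫₂ (each chunk of 𝒫₂ is a union of consecutive chunks of 𝒫₁), we have P(𝒫₁) ≥ P(𝒫₂). -/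
import Mathlib


open Finset

/-- The success probability of a partition of the fixed recovery order
`σ : Fin M → Fin L` into consecutive chunks, the partition being encoded by its set of
chunk boundaries `B ⊆ {0, …, M}` (with `0 ∈ B` and `M ∈ B`).  Token `σ j` is recovered
in the chunk starting at the largest boundary `≤ j`, and at that moment the observed
set consists of the initially observed tokens `U0` together with all tokens recovered
in strictly earlier chunks. -/
noncomputable def successProb {L M : ℕ} (q : Finset (Fin L) → Fin L → ℝ)
    (U0 : Finset (Fin L)) (σ : Fin M → Fin L) (B : Finset ℕ) : ℝ :=
  ∏ j : Fin M,
    q (U0 ∪ (Finset.univ.filter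
        (fun i : Fin M => (i : ℕ) < (B.filter (· ≤ (j : ℕ))).sup id)).image σ) (σ j)

/-- **Monotonicity of memorization under partition refinement.**  If the per-token
recovery probability `q U π ∈ [0,1]` is monotone in the observed set `U` (for tokens
`π ∉ U`), and the partition encoded by `B₁` refines the one encoded by `B₂`
(i.e. `B₂ ⊆ B₁`), then the success probability under `B₁` is at least that under `B₂`. -/
theorem successProb_le_of_refines {L M : ℕ} (q : Finset (Fin L) → Fin L → ℝ)
    (U0 : Finset (Fin L)) (σ : Fin M → Fin L)
    (hσ : Function.Injective σ)
    (hU0 : ∀ j : Fin M, σ j ∉ U0)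
    (hq0 : ∀ U π, 0 ≤ q U π) (hq1 : ∀ U π, q U π ≤ 1)
    (hmono : ∀ U W π, U ⊆ W → π ∉ W → q U π ≤ q W π)
    (B₁ B₂ : Finset ℕ)
    (h0₁ : 0 ∈ B₁) (hM₁ : M ∈ B₁) (hle₁ : ∀ x ∈ B₁, x ≤ M)
    (h0₂ : 0 ∈ B₂) (hM₂ : M ∈ B₂) (hle₂ : ∀ x ∈ B₂, x ≤ M)
    (href : B₂ ⊆ B₁) :
    successProb q U0 σ B₂ ≤ successProb q U0 σ B₁ := by
  unfold successProb
  apply Finset.prod_le_prod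
  · intro j _; exact hq0 _ _
  · intro j _
    have hsup_le : (B₁.filter (· ≤ (j : ℕ))).sup id ≤ (j : ℕ) := by
      apply Finset.sup_le
      intro x hx
      exact (Finset.mem_filter.mp hx).2
    have hnotmem : σ j ∉ U0 ∪ (Finset.univ.filter
        (fun i : Fin M => (i : ℕ) < (B₁.filter (· ≤ (j : ℕ))).sup id)).image σ := by
      simp only [Finset.mem_union, Finset.mem_image, Finset.mem_filter, Finset.mem_univ,
        true_and, not_or, not_exists]
      refine ⟨hU0 j, ?_⟩
      rintro i ⟨hi, hσi⟩
      have : (i : ℕ) < (j : ℕ) := lt_of_lt_of_le hi hsup_le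
      exact absurd (hσ hσi) (fun h => by simp [h] at this)
    apply hmono _ _ _ _ hnotmem
    apply Finset.union_subset_union_right
    apply Finset.image_subset_image
    intro i hi
    simp only [Finset.mem_filter, Finset.mem_univ, true_and] at hi ⊢
    exact lt_of_lt_of_le hi (Finset.sup_mono (Finset.filter_subset_filter _ href))
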